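/- Grönwall step of Theorem 2.1 (fractional-exponential flocking decay): let η, γ ≥ 0 with ηγ < 1, let ζ, C_K, C_D, R > 0, let λ : [0,∞) → [0,∞) be nonincreasing with λ(r) ≥ C_K (1+r)^{−η} for all r ≥ R, let D : [0,∞) → [0,∞) be continuous with D(t) ≤ C_D (1+t)^{γ} for all t ≥ 0, and let F : [0,∞) → [0,∞) be differentiable with F′(t) ≤ −2ζ λ(D(t)) F(t) for all t ≥ 0. Then there exist constants C_R > 0 and c > 0, depending only on η, γ, ζ, C_K, C_D, R, such that F(t) ≤ C_R · exp(−c t^{1−ηγ}) · F(0) for all t ≥ 0. -/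

import Mathlib

/-- Grönwall step of Theorem 2.1 (fractional-exponential flocking decay). -/
theorem stmt_8 (η γ ζ C_K C_D R : ℝ)
    (hη : 0 ≤ η) (hγ : 0 ≤ γ) (hηγ : η * γ < 1)
    (hζ : 0 < ζ) (hCK : 0 < C_K) (hCD : 0 < C_D) (hR : 0 < R)
    (lam : ℝ → ℝ) (hlam_nonneg : ∀ r ≥ (0:ℝ), 0 ≤ lam r)
    (hlam_anti : AntitoneOn lam (Set.Ici 0))
    (hlam_lb : ∀ r ≥ R, C_K * (1 + r) ^ (-η) ≤ lam r)
    (D : ℝ → ℝ) (hD_cont : ContinuousOn D (Set.Ici 0))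
    (hD_nonneg : ∀ t ≥ (0:ℝ), 0 ≤ D t)
    (hD_ub : ∀ t ≥ (0:ℝ), D t ≤ C_D * (1 + t) ^ γ)
    (F : ℝ → ℝ) (hF_nonneg : ∀ t ≥ (0:ℝ), 0 ≤ F t)
    (hF_diff : Differentiable ℝ F)
    (hF' : ∀ t ≥ (0:ℝ), deriv F t ≤ -2 * ζ * lam (D t) * F t) :
    ∃ C_R > 0, ∃ c > 0, ∀ t ≥ (0:ℝ),
      F t ≤ C_R * Real.exp (-c * t ^ (1 - η * γ)) * F 0 := by
  set β : ℝ := 1 - η * γ with hβdef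
  have hβ : 0 < β := by simp only [hβdef]; linarith
  have hηγ0 : 0 ≤ η * γ := mul_nonneg hη hγ
  set c₀ : ℝ := C_K * (1 + R + C_D) ^ (-η) with hc0
  have hc0pos : 0 < c₀ :=
    mul_pos hCK (Real.rpow_pos_of_pos (by linarith) _)
  set b : ℝ := 2 * ζ * c₀ / β with hb
  have hbpos : 0 < b := div_pos (by positivity) hβ
  -- key pointwise bound
  have key : ∀ t ≥ (0:ℝ), b * (β * (1 + t) ^ (β - 1)) ≤ 2 * ζ * lam (D t) := by
    intro t ht
    have h1t : (1:ℝ) ≤ 1 + t := by linarith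
    have hpow1 : (1:ℝ) ≤ (1 + t) ^ γ := Real.one_le_rpow h1t hγ
    have hCDpow : 0 ≤ C_D * (1 + t) ^ γ := by positivity
    have hDt : D t ≤ R + C_D * (1 + t) ^ γ := by
      have := hD_ub t ht; linarith
    have hlam1 : lam (R + C_D * (1 + t) ^ γ) ≤ lam (D t) :=
      hlam_anti (Set.mem_Ici.mpr (hD_nonneg t ht))
        (Set.mem_Ici.mpr (by linarith)) hDt
    have hlam2 : C_K * (1 + (R + C_D * (1 + t) ^ γ)) ^ (-η)
        ≤ lam (R + C_D * (1 + t) ^ γ) :=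
      hlam_lb _ (by linarith)
    have hbase : 1 + (R + C_D * (1 + t) ^ γ) ≤ (1 + R + C_D) * (1 + t) ^ γ := by
      nlinarith [hpow1, hR.le]
    have hmono : ((1 + R + C_D) * (1 + t) ^ γ) ^ (-η)
        ≤ (1 + (R + C_D * (1 + t) ^ γ)) ^ (-η) :=
      Real.rpow_le_rpow_of_nonpos (by linarith) hbase (neg_nonpos.mpr hη)
    have heq : ((1 + R + C_D) * (1 + t) ^ γ) ^ (-η)
        = (1 + R + C_D) ^ (-η) * (1 + t) ^ (β - 1) := by
      rw [Real.mul_rpow (by linarith) (by positivity),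
        ← Real.rpow_mul (by linarith : (0:ℝ) ≤ 1 + t)]
      congr 1
      simp only [hβdef]; ring_nf
    have hchain : c₀ * (1 + t) ^ (β - 1) ≤ lam (D t) := by
      have h1 : C_K * (((1 + R + C_D) * (1 + t) ^ γ) ^ (-η))
          ≤ C_K * ((1 + (R + C_D * (1 + t) ^ γ)) ^ (-η)) :=
        mul_le_mul_of_nonneg_left hmono hCK.le
      rw [heq] at h1
      calc c₀ * (1 + t) ^ (β - 1)
          = C_K * ((1 + R + C_D) ^ (-η) * (1 + t) ^ (β - 1)) := by
            rw [hc0]; ring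
        _ ≤ C_K * (1 + (R + C_D * (1 + t) ^ γ)) ^ (-η) := h1
        _ ≤ lam (R + C_D * (1 + t) ^ γ) := hlam2
        _ ≤ lam (D t) := hlam1
    have hbb : b * β = 2 * ζ * c₀ := by
      rw [hb]; exact div_mul_cancel₀ _ hβ.ne'
    calc b * (β * (1 + t) ^ (β - 1))
        = 2 * ζ * (c₀ * (1 + t) ^ (β - 1)) := by rw [← mul_assoc, hbb]; ring
      _ ≤ 2 * ζ * lam (D t) :=
          mul_le_mul_of_nonneg_left hchain (by positivity)
  -- the auxiliary function G
  set G : ℝ → ℝ := fun t => F t * Real.exp (b * (1 + t) ^ β) with hG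
  have hcont_u : Continuous fun s : ℝ => (1 + s) ^ β := by
    rw [continuous_iff_continuousAt]
    intro x
    exact (Real.continuousAt_rpow_const _ _ (Or.inr hβ.le)).comp
      (continuous_const.add continuous_id).continuousAt
  have hG_cont : Continuous G :=
    hF_diff.continuous.mul (Real.continuous_exp.comp (continuous_const.mul hcont_u))
  have hG_deriv : ∀ t : ℝ, 0 < t → HasDerivAt G
      (deriv F t * Real.exp (b * (1 + t) ^ β)
        + F t * (Real.exp (b * (1 + t) ^ β) * (b * (β * (1 + t) ^ (β - 1))))) t := by
    intro t ht
    have h1 : HasDerivAt (fun s : ℝ => 1 + s) 1 t := by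
      simpa using (hasDerivAt_id t).const_add 1
    have h2 : HasDerivAt (fun s : ℝ => (1 + s) ^ β) (β * (1 + t) ^ (β - 1)) t := by
      have := (Real.hasDerivAt_rpow_const
        (p := β) (x := 1 + t) (Or.inl (by positivity))).comp t h1
      simpa [Function.comp_def] using this
    have h3 : HasDerivAt (fun s : ℝ => Real.exp (b * (1 + s) ^ β))
        (Real.exp (b * (1 + t) ^ β) * (b * (β * (1 + t) ^ (β - 1)))) t := by
      have := (Real.hasDerivAt_exp (b * (1 + t) ^ β)).comp t (h2.const_mul b)
      simpa [mul_comm, mul_assoc, Function.comp_def] using this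
    exact ((hF_diff t).hasDerivAt).mul h3
  have hG_anti : AntitoneOn G (Set.Ici (0:ℝ)) := by
    apply antitoneOn_of_deriv_nonpos (convex_Ici 0) hG_cont.continuousOn
    · intro t ht
      rw [interior_Ici] at ht
      exact (hG_deriv t ht).differentiableAt.differentiableWithinAt
    · intro t ht
      rw [interior_Ici] at ht
      rw [(hG_deriv t ht).deriv]
      have hkey := key t ht.le
      have hE : 0 < Real.exp (b * (1 + t) ^ β) := Real.exp_pos _
      have hFt : 0 ≤ F t := hF_nonneg t ht.le
      have hder : deriv F t ≤ -2 * ζ * lam (D t) * F t := hF' t ht.le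
      nlinarith [mul_le_mul_of_nonneg_left hkey hFt]
  refine ⟨Real.exp b, Real.exp_pos b, b, hbpos, fun t ht => ?_⟩
  have hGle : G t ≤ G 0 := hG_anti (Set.mem_Ici.mpr le_rfl) (Set.mem_Ici.mpr ht) ht
  have hG0 : G 0 = F 0 * Real.exp b := by
    simp [hG, Real.rpow_natCast]
  have hE : 0 < Real.exp (b * (1 + t) ^ β) := Real.exp_pos _
  have hstep : F t ≤ F 0 * Real.exp b * Real.exp (-(b * (1 + t) ^ β)) := by
    rw [hG0] at hGle
    rw [Real.exp_neg, ← div_eq_mul_inv]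
    exact (le_div_iff₀ hE).mpr hGle
  have hpow : t ^ β ≤ (1 + t) ^ β :=
    Real.rpow_le_rpow ht (by linarith) hβ.le
  have hexp : Real.exp (-(b * (1 + t) ^ β)) ≤ Real.exp (-b * t ^ β) := by
    apply Real.exp_le_exp.mpr
    have := mul_le_mul_of_nonneg_left hpow hbpos.le
    linarith
  calc F t ≤ F 0 * Real.exp b * Real.exp (-(b * (1 + t) ^ β)) := hstep
    _ ≤ F 0 * Real.exp b * Real.exp (-b * t ^ β) :=
        mul_le_mul_of_nonneg_left hexp (mul_nonneg (hF_nonneg 0 le_rfl) (Real.exp_pos b).le)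
    _ = Real.exp b * Real.exp (-b * t ^ β) * F 0 := by ring
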